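/- Let (M, H, J, P) be a standard form of a σ-finite von Neumann algebra M and let ξ₀ ∈ P be a cyclic and separating vector for M. Suppose (S_n) is a net of completely positive operators on H with S_n → 1_H in the strong operator topology. Then there exists a net (S′_n) of completely positive operators on H such that: (1) S′_n → 1_H in the strong operator topology; (2) S′_n − S_n has rank one for every n; (3) ‖S′_n − S_n‖ → 0; (4) S′_n ξ₀ is a cyclic and separating vector for M for every n. In particular, if moreover each S_n is a compact contraction, then there exists a net (T_n) of compact completely positive contractions on H with T_n → 1_H in the strong operator topology such that T_n ξ₀ is cyclic and separating for every n. -/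

import Mathlib

open scoped ComplexOrder
open Filter Topology

noncomputable section

universe u v

/-- A net indexed by a nonempty directed preorder. -/
structure Net (α : Type v) : Type (max (u + 1) v) where
  ι : Type u
  [pre : Preorder ι]
  [ne : Nonempty ι]
  directed : ∀ a b : ι, ∃ c : ι, a ≤ c ∧ b ≤ c
  f : ι → α

attribute [instance] Net.pre Net.ne

/-- A standard form `(M, H, J, P)` of a von Neumann algebra: `J` is a conjugate-linear
isometric involution, `P` a closed self-dual convex cone, with the Haagerup axioms. -/
structure StandardForm (H : Type u) [NormedAddCommGroup H] [InnerProductSpace ℂ H]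
    [CompleteSpace H] where
  M : VonNeumannAlgebra H
  J : H →ₗ⋆[ℂ] H
  P : Set H
  isometry_J : ∀ ξ : H, ‖J ξ‖ = ‖ξ‖
  involutive_J : ∀ ξ : H, J (J ξ) = ξ
  closed_P : IsClosed P
  convex_P : Convex ℝ P
  cone_P : ∀ c : ℝ, 0 ≤ c → ∀ ξ ∈ P, c • ξ ∈ P
  selfdual_P : P = {ξ : H | ∀ η ∈ P, 0 ≤ (inner ℂ ξ η : ℂ)}
  commutant_JMJ : ∀ y : H →L[ℂ] H,
    y ∈ M.commutant ↔ ∃ x ∈ M, ∀ ξ : H, y ξ = J (x (J ξ))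
  J_fix_P : ∀ ξ ∈ P, J ξ = ξ
  xJxJ_P : ∀ x : H →L[ℂ] H, x ∈ M → ∀ ξ ∈ P, x (J (x (J ξ))) ∈ P
  center_JcJ : ∀ c : H →L[ℂ] H, c ∈ M → c ∈ M.commutant →
    ∀ ξ : H, J (c (J ξ)) = star c ξ

variable {H : Type u} [NormedAddCommGroup H] [InnerProductSpace ℂ H] [CompleteSpace H]
variable {H₁ : Type u} [NormedAddCommGroup H₁] [InnerProductSpace ℂ H₁] [CompleteSpace H₁]
variable {H₂ : Type v} [NormedAddCommGroup H₂] [InnerProductSpace ℂ H₂] [CompleteSpace H₂]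

/-- The matrix cone `P^(n) ⊆ Mₙ(H)`: all `[ξ i j]` such that
`∑ i j, x i • J (x j (J (ξ i j))) ∈ P` for all `x : Fin n → M`. -/
def StandardForm.matrixCone (SF : StandardForm H) (n : ℕ) :
    Set (Matrix (Fin n) (Fin n) H) :=
  {ξ | ∀ x : Fin n → (H →L[ℂ] H), (∀ i, x i ∈ SF.M) →
    (∑ i : Fin n, ∑ j : Fin n, (x i) (SF.J ((x j) (SF.J (ξ i j))))) ∈ SF.P}

/-- Complete positivity of a bounded operator between the Hilbert spaces of two standard
forms: the amplification maps `P₁^(n)` into `P₂^(n)` for every `n`. -/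
def IsCompletelyPositive (SF₁ : StandardForm H₁) (SF₂ : StandardForm H₂)
    (T : H₁ →L[ℂ] H₂) : Prop :=
  ∀ n : ℕ, ∀ ξ ∈ SF₁.matrixCone n,
    (Matrix.of fun i j => T (ξ i j)) ∈ SF₂.matrixCone n

/-- The Haagerup approximation property relative to a given standard form: there is a net of
compact completely positive contractions converging to the identity in the strong operator
topology. -/
def StandardForm.HAP (SF : StandardForm H) : Prop :=
  ∃ T : Net.{u} (H →L[ℂ] H),
    (∀ n, IsCompactOperator ⇑(T.f n) ∧ ‖T.f n‖ ≤ 1 ∧ IsCompletelyPositive SF SF (T.f n)) ∧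
    ∀ ξ : H, Tendsto (fun n => T.f n ξ) atTop (𝓝 ξ)

/-- A bundled complex Hilbert space. -/
structure HilbertC : Type (u + 1) where
  carrier : Type u
  [nacg : NormedAddCommGroup carrier]
  [ips : InnerProductSpace ℂ carrier]
  [cs : CompleteSpace carrier]

attribute [instance] HilbertC.nacg HilbertC.ips HilbertC.cs

/-- A von Neumann algebra has the Haagerup approximation property if there exist a standard
form of (an isomorphic copy of) it and a net of compact completely positive contractions
converging to the identity in the strong operator topology. -/
def VonNeumannAlgebra.HAP {K : Type u} [NormedAddCommGroup K] [InnerProductSpace ℂ K]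
    [CompleteSpace K] (M : VonNeumannAlgebra K) : Prop :=
  ∃ (X : HilbertC.{u}) (SF : StandardForm X.carrier)
    (_ : M.toStarSubalgebra ≃⋆ₐ[ℂ] SF.M.toStarSubalgebra), SF.HAP

set_option linter.unusedSectionVars false

namespace StandardForm

variable (SF : StandardForm H)

lemma J_inj : Function.Injective SF.J := by
  intro a b h
  have h2 : ‖a - b‖ = 0 := by
    rw [← SF.isometry_J (a - b), map_sub, h, sub_self, norm_zero]
  rwa [norm_eq_zero, sub_eq_zero] at h2

lemma J_real_smul (r : ℝ) (v : H) : SF.J (r • v) = r • SF.J v := by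
  rw [← Complex.coe_smul, ← Complex.coe_smul, map_smulₛₗ, Complex.conj_ofReal]

lemma P_add {p q : H} (hp : p ∈ SF.P) (hq : q ∈ SF.P) : p + q ∈ SF.P := by
  have h := SF.convex_P hp hq (by norm_num : (0:ℝ) ≤ 1/2) (by norm_num : (0:ℝ) ≤ 1/2)
    (by norm_num)
  have h2 := SF.cone_P 2 (by norm_num) _ h
  convert h2 using 1
  module

lemma P_zero {p : H} (hp : p ∈ SF.P) : (0 : H) ∈ SF.P := by
  simpa using SF.cone_P 0 le_rfl p hp

lemma P_inner_nonneg {p q : H} (hp : p ∈ SF.P) (hq : q ∈ SF.P) :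
    0 ≤ (inner ℂ p q : ℂ) := by
  have := SF.selfdual_P ▸ hp
  exact this q hq

lemma P_add_eq_zero {p q : H} (hp : p ∈ SF.P) (hq : q ∈ SF.P) (h : p + q = 0) :
    p = 0 := by
  have h1 : 0 ≤ (inner ℂ p q : ℂ) := SF.P_inner_nonneg hp hq
  have hq' : q = -p := eq_neg_of_add_eq_zero_right h
  rw [hq', inner_neg_right] at h1
  have h2 : (inner ℂ p p : ℂ) = (‖p‖ : ℂ) ^ 2 := inner_self_eq_norm_sq_to_K p
  rw [h2] at h1
  have h3 := (Complex.le_def.mp h1).1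
  simp only [Complex.zero_re, Complex.neg_re] at h3
  have h4 : ((‖p‖:ℂ)^2).re = ‖p‖^2 := by
    rw [← Complex.ofReal_pow, Complex.ofReal_re]
  rw [h4] at h3
  have : ‖p‖ = 0 := by nlinarith [norm_nonneg p]
  rwa [norm_eq_zero] at this

lemma P_sum {α : Type*} (s : Finset α) (f : α → H) (h0 : (0:H) ∈ SF.P)
    (hf : ∀ i ∈ s, f i ∈ SF.P) : ∑ i ∈ s, f i ∈ SF.P :=
  Finset.sum_induction f (· ∈ SF.P) (fun _ _ ha hb => SF.P_add ha hb) h0 hf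

/-- `ξ ↦ J (x (J ξ))` as a continuous linear map. -/
def conjJ (x : H →L[ℂ] H) : H →L[ℂ] H :=
  LinearMap.mkContinuous
    { toFun := fun ξ => SF.J (x (SF.J ξ))
      map_add' := fun a b => by
        show SF.J (x (SF.J (a + b))) = SF.J (x (SF.J a)) + SF.J (x (SF.J b))
        rw [map_add, map_add, map_add]
      map_smul' := fun c a => by
        show SF.J (x (SF.J (c • a))) = c • SF.J (x (SF.J a))
        rw [map_smulₛₗ, map_smul, map_smulₛₗ, Complex.conj_conj] }
    ‖x‖ (fun ξ => by
      show ‖SF.J (x (SF.J ξ))‖ ≤ ‖x‖ * ‖ξ‖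
      rw [SF.isometry_J]
      calc ‖x (SF.J ξ)‖ ≤ ‖x‖ * ‖SF.J ξ‖ := x.le_opNorm _
        _ = ‖x‖ * ‖ξ‖ := by rw [SF.isometry_J])

@[simp] lemma conjJ_apply (x : H →L[ℂ] H) (ξ : H) :
    SF.conjJ x ξ = SF.J (x (SF.J ξ)) := rfl

lemma conjJ_mem {x : H →L[ℂ] H} (hx : x ∈ SF.M) : SF.conjJ x ∈ SF.M.commutant :=
  (SF.commutant_JMJ _).mpr ⟨x, hx, fun _ => rfl⟩

lemma commute_of_mem {x y : H →L[ℂ] H} (hx : x ∈ SF.M) (hy : y ∈ SF.M.commutant)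
    (ξ : H) : x (y ξ) = y (x ξ) := by
  have h := VonNeumannAlgebra.mem_commutant_iff.mp hy x hx
  calc x (y ξ) = (x * y) ξ := rfl
    _ = (y * x) ξ := by rw [h]
    _ = y (x ξ) := rfl

/-- Core polarization lemma: if `x J x J ξ₀ = 0` for `ξ₀ ∈ P` and `x ∈ M`,
then `x ξ₀ = 0`. -/
lemma core_cancel {ξ₀ : H} (hξ₀P : ξ₀ ∈ SF.P) {x : H →L[ℂ] H} (hx : x ∈ SF.M)
    (h0 : x (SF.J (x (SF.J ξ₀))) = 0) : x ξ₀ = 0 := by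
  have key : ∀ z : H →L[ℂ] H, z ∈ SF.M →
      z (SF.J (x (SF.J ξ₀))) + x (SF.J (z (SF.J ξ₀))) ∈ SF.P := by
    intro z hz
    set A := z (SF.J (x (SF.J ξ₀))) with hA
    set B := x (SF.J (z (SF.J ξ₀))) with hB
    set C := z (SF.J (z (SF.J ξ₀))) with hC
    have step : ∀ s : ℝ, 0 < s → (A + B) + s • C ∈ SF.P := by
      intro s hs
      have hmem : (x + (s:ℂ) • z) ∈ SF.M := add_mem hx (SF.M.toStarSubalgebra.smul_mem hz _)
      have h1 := SF.xJxJ_P _ hmem ξ₀ hξ₀P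
      have hexp : (x + (s:ℂ) • z) (SF.J ((x + (s:ℂ) • z) (SF.J ξ₀))) =
          s • ((A + B) + s • C) := by
        have e1 : (x + (s:ℂ) • z) (SF.J ξ₀) = x (SF.J ξ₀) + (s:ℂ) • z (SF.J ξ₀) := by
          simp
        rw [e1, map_add, map_smulₛₗ, Complex.conj_ofReal]
        simp only [ContinuousLinearMap.add_apply, ContinuousLinearMap.coe_smul',
          Pi.smul_apply, map_add, map_smul, h0, hA, hB, hC, ← Complex.coe_smul]
        module
      rw [hexp] at h1
      have h2 := SF.cone_P s⁻¹ (by positivity) _ h1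
      rwa [smul_smul, inv_mul_cancel₀ (ne_of_gt hs), one_smul] at h2
    have t1 : Tendsto (fun m : ℕ => (A + B) + (1/(m+1):ℝ) • C) atTop
        (𝓝 ((A + B) + (0:ℝ) • C)) :=
      tendsto_const_nhds.add (tendsto_one_div_add_atTop_nhds_zero_nat.smul_const C)
    have t2 : (A + B) + (0:ℝ) • C ∈ SF.P :=
      SF.closed_P.mem_of_tendsto t1
        (Filter.Eventually.of_forall fun m => step _ (by positivity))
    simpa using t2
  have hAB : ∀ z : H →L[ℂ] H, z ∈ SF.M →
      z (SF.J (x (SF.J ξ₀))) + x (SF.J (z (SF.J ξ₀))) = 0 := by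
    intro z hz
    have hneg : (-z) (SF.J (x (SF.J ξ₀))) + x (SF.J ((-z) (SF.J ξ₀))) =
        -(z (SF.J (x (SF.J ξ₀))) + x (SF.J (z (SF.J ξ₀)))) := by
      simp only [ContinuousLinearMap.neg_apply, map_neg]
      abel
    have h2 := key (-z) (neg_mem hz)
    rw [hneg] at h2
    exact SF.P_add_eq_zero (key z hz) h2 (add_neg_cancel _)
  have hI : ∀ z : H →L[ℂ] H, z ∈ SF.M →
      z (SF.J (x (SF.J ξ₀))) = x (SF.J (z (SF.J ξ₀))) := by
    intro z hz
    have h2 := hAB (Complex.I • z) (SF.M.toStarSubalgebra.smul_mem hz _)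
    have e1 : (Complex.I • z) (SF.J (x (SF.J ξ₀))) = Complex.I • z (SF.J (x (SF.J ξ₀))) := by
      simp
    have e2 : x (SF.J ((Complex.I • z) (SF.J ξ₀))) =
        -(Complex.I • x (SF.J (z (SF.J ξ₀)))) := by
      simp only [ContinuousLinearMap.coe_smul', Pi.smul_apply, map_smulₛₗ, Complex.conj_I,
        map_smul, neg_smul, map_neg, neg_neg, RingHom.id_apply]
    rw [e1, e2] at h2
    have h3 : Complex.I • (z (SF.J (x (SF.J ξ₀))) - x (SF.J (z (SF.J ξ₀)))) = 0 := by
      rw [smul_sub, sub_eq_add_neg]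
      exact h2
    rcases smul_eq_zero.mp h3 with h | h
    · exact absurd h Complex.I_ne_zero
    · exact sub_eq_zero.mp h
  have h4 := hAB 1 (one_mem _)
  have h5 := hI 1 (one_mem _)
  rw [h5] at h4
  have h6 : x (SF.J ((1 : H →L[ℂ] H) (SF.J ξ₀))) = 0 := by
    have h7 : (2:ℂ) • x (SF.J ((1 : H →L[ℂ] H) (SF.J ξ₀))) = 0 := by
      rw [two_smul]; exact h4
    rcases smul_eq_zero.mp h7 with h | h
    · norm_num at h
    · exact h
  rw [ContinuousLinearMap.one_apply, SF.involutive_J] at h6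
  exact h6


section Shift

variable {SF : StandardForm H} {ξ₀ : H}

/-- If `x ∈ M` kills `η + δ • ξ₀` with `η ∈ P`, `δ > 0`, then `x = 0`. -/
lemma sep_shift (hξ₀P : ξ₀ ∈ SF.P)
    (hsep : ∀ x : H →L[ℂ] H, x ∈ SF.M → x ξ₀ = 0 → x = 0)
    {η : H} (hη : η ∈ SF.P) {δ : ℝ} (hδ : 0 < δ) {x : H →L[ℂ] H} (hx : x ∈ SF.M)
    (hxz : x (η + δ • ξ₀) = 0) : x = 0 := by
  set ζ := η + δ • ξ₀ with hζ
  have h1 : x (SF.J (x (SF.J ζ))) = 0 := by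
    have h2 := SF.commute_of_mem hx (SF.conjJ_mem hx) ζ
    rw [SF.conjJ_apply, SF.conjJ_apply] at h2
    rw [h2, hxz]
    simp
  have h3 : x (SF.J (x (SF.J ζ))) =
      x (SF.J (x (SF.J η))) + δ • x (SF.J (x (SF.J ξ₀))) := by
    simp only [hζ, map_add, SF.J_real_smul, ContinuousLinearMap.map_smul_of_tower]
  rw [h3] at h1
  have hp : x (SF.J (x (SF.J η))) ∈ SF.P := SF.xJxJ_P x hx η hη
  have hq : x (SF.J (x (SF.J ξ₀))) ∈ SF.P := SF.xJxJ_P x hx ξ₀ hξ₀P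
  have hq' : δ • x (SF.J (x (SF.J ξ₀))) ∈ SF.P := SF.cone_P δ hδ.le _ hq
  have h4 : δ • x (SF.J (x (SF.J ξ₀))) = 0 :=
    SF.P_add_eq_zero hq' hp (by rw [add_comm]; exact h1)
  have h5 : x (SF.J (x (SF.J ξ₀))) = 0 := by
    rcases smul_eq_zero.mp h4 with h | h
    · exact absurd h (ne_of_gt hδ)
    · exact h
  exact hsep x hx (SF.core_cancel hξ₀P hx h5)

/-- Same for elements of the commutant. -/
lemma sep_shift_comm (hξ₀P : ξ₀ ∈ SF.P)
    (hsep : ∀ x : H →L[ℂ] H, x ∈ SF.M → x ξ₀ = 0 → x = 0)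
    {η : H} (hη : η ∈ SF.P) {δ : ℝ} (hδ : 0 < δ) {y : H →L[ℂ] H}
    (hy : y ∈ SF.M.commutant) (hyz : y (η + δ • ξ₀) = 0) : y = 0 := by
  obtain ⟨x, hx, hxy⟩ := (SF.commutant_JMJ y).mp hy
  set ζ := η + δ • ξ₀ with hζ
  have hζP : ζ ∈ SF.P := SF.P_add hη (SF.cone_P δ hδ.le _ hξ₀P)
  have hJζ : SF.J ζ = ζ := SF.J_fix_P ζ hζP
  have h1 : SF.J (x ζ) = 0 := by
    have := hxy ζ
    rw [hJζ] at this
    rw [← this, hyz]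
  have h2 : x ζ = 0 := SF.J_inj (by rw [h1, map_zero])
  have h3 : x = 0 := sep_shift hξ₀P hsep hη hδ hx h2
  ext ξ
  rw [hxy ξ, h3]
  simp

/-- Cyclicity of the shifted vector. -/
lemma cyclic_shift (hξ₀P : ξ₀ ∈ SF.P)
    (hsep : ∀ x : H →L[ℂ] H, x ∈ SF.M → x ξ₀ = 0 → x = 0)
    {η : H} (hη : η ∈ SF.P) {δ : ℝ} (hδ : 0 < δ) :
    Dense {η' : H | ∃ x ∈ SF.M, η' = x (η + δ • ξ₀)} := by
  set ζ := η + δ • ξ₀ with hζ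
  let W : Submodule ℂ H :=
    { carrier := {η' : H | ∃ x ∈ SF.M, η' = x ζ}
      zero_mem' := ⟨0, zero_mem _, by simp⟩
      add_mem' := by
        rintro a b ⟨xa, hxa, rfl⟩ ⟨xb, hxb, rfl⟩
        exact ⟨xa + xb, add_mem hxa hxb, by simp⟩
      smul_mem' := by
        rintro c a ⟨xa, hxa, rfl⟩
        exact ⟨c • xa, SF.M.toStarSubalgebra.smul_mem hxa c, by simp⟩ }
  set K := W.topologicalClosure with hK
  haveI : CompleteSpace K := W.isClosed_topologicalClosure.completeSpace_coe
  set Pc : H →L[ℂ] H := K.starProjection with hPc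
  have hPc_apply : ∀ ξ : H, Pc ξ = K.starProjection ξ := fun _ => rfl
  have hKinv : ∀ g : H →L[ℂ] H, g ∈ SF.M → ∀ v ∈ K, g v ∈ K := by
    intro g hg v hv
    have h1 : g '' (W : Set H) ⊆ (W : Set H) := by
      rintro w ⟨u, ⟨xu, hxu, rfl⟩, rfl⟩
      exact ⟨g * xu, mul_mem hg hxu, rfl⟩
    have hv' : v ∈ closure (W : Set H) := hv
    have h2 : g v ∈ closure (g '' (W : Set H)) :=
      image_closure_subset_closure_image g.continuous (Set.mem_image_of_mem _ hv')
    exact closure_mono h1 h2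
  have hPc_mem : Pc ∈ SF.M.commutant := by
    rw [VonNeumannAlgebra.mem_commutant_iff]
    intro g hg
    ext ξ
    show g (Pc ξ) = Pc (g ξ)
    have ha : Pc ξ ∈ K := K.starProjection_apply_mem ξ
    have hb : ξ - Pc ξ ∈ Kᗮ := K.sub_starProjection_mem_orthogonal ξ
    have hga : g (Pc ξ) ∈ K := hKinv g hg _ ha
    have hgb : g ξ - g (Pc ξ) ∈ Kᗮ := by
      rw [← map_sub, Submodule.mem_orthogonal]
      intro u hu
      have hstar : (star g) u ∈ K := hKinv (star g) (star_mem hg) u hu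
      have e1 : (inner ℂ ((ContinuousLinearMap.adjoint g) u) (ξ - Pc ξ) : ℂ) =
          inner ℂ u (g (ξ - Pc ξ)) := ContinuousLinearMap.adjoint_inner_left g (ξ - Pc ξ) u
      rw [← e1]
      rw [ContinuousLinearMap.star_eq_adjoint] at hstar
      exact (Submodule.mem_orthogonal _ _).mp hb _ hstar
    have := Submodule.eq_starProjection_of_mem_orthogonal (K := K) hga hgb
    rw [hPc_apply (g ξ)]
    exact this.symm
  have hζW : ζ ∈ W := ⟨1, one_mem _, by simp⟩
  have hζK : ζ ∈ K := W.le_topologicalClosure hζW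
  have hPcζ : Pc ζ = ζ := by
    rw [hPc_apply]
    exact K.starProjection_eq_self_iff.mpr hζK
  have hy : (1 - Pc : H →L[ℂ] H) = 0 :=
    sep_shift_comm hξ₀P hsep hη hδ (sub_mem (one_mem _) hPc_mem)
      (by rw [← hζ, ContinuousLinearMap.sub_apply, ContinuousLinearMap.one_apply, hPcζ, sub_self])
  have hKtop : K = ⊤ := by
    rw [Submodule.eq_top_iff']
    intro ξ
    have h1 : (1 - Pc : H →L[ℂ] H) ξ = 0 := by rw [hy]; simp
    have h2 : ξ = Pc ξ := by
      rw [ContinuousLinearMap.sub_apply, ContinuousLinearMap.one_apply, sub_eq_zero] at h1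
      exact h1
    rw [h2, hPc_apply]
    exact K.starProjection_apply_mem ξ
  have : Dense (W : Set H) := Submodule.dense_iff_topologicalClosure_eq_top.mpr hKtop
  exact this

/-- Scaling a cyclic-separating vector by a nonzero scalar. -/
lemma scale_cs {SF : StandardForm H} (a : ℂ) (ha : a ≠ 0) (ζ : H)
    (hD : Dense {η : H | ∃ x ∈ SF.M, η = x ζ})
    (hS : ∀ x : H →L[ℂ] H, x ∈ SF.M → x ζ = 0 → x = 0) :
    Dense {η : H | ∃ x ∈ SF.M, η = x (a • ζ)} ∧
      ∀ x : H →L[ℂ] H, x ∈ SF.M → x (a • ζ) = 0 → x = 0 := by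
  constructor
  · have hset : {η : H | ∃ x ∈ SF.M, η = x (a • ζ)} =
        (a • ·) '' {η : H | ∃ x ∈ SF.M, η = x ζ} := by
      ext w
      constructor
      · rintro ⟨x, hx, rfl⟩
        exact ⟨x ζ, ⟨x, hx, rfl⟩, by simp⟩
      · rintro ⟨u, ⟨x, hx, rfl⟩, rfl⟩
        exact ⟨x, hx, by simp⟩
    rw [hset]
    intro w
    have h1 : a⁻¹ • w ∈ closure {η : H | ∃ x ∈ SF.M, η = x ζ} := hD _
    have h2 := image_closure_subset_closure_image (continuous_const_smul a)
      (Set.mem_image_of_mem (a • ·) h1)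
    simpa [smul_smul, mul_inv_cancel₀ ha] using h2
  · intro x hx hxz
    apply hS x hx
    rw [map_smul] at hxz
    rcases smul_eq_zero.mp hxz with h | h
    · exact absurd h ha
    · exact h

end Shift

section CP

variable (SF : StandardForm H)

lemma isCP_add {A B : H →L[ℂ] H} (hA : IsCompletelyPositive SF SF A)
    (hB : IsCompletelyPositive SF SF B) : IsCompletelyPositive SF SF (A + B) := by
  intro n ξ hξ x hx
  have hA' := hA n ξ hξ x hx
  have hB' := hB n ξ hξ x hx
  have hsum := SF.P_add hA' hB'
  have he : (∑ i : Fin n, ∑ j : Fin n,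
      (x i) (SF.J ((x j) (SF.J ((Matrix.of fun i j => (A + B) (ξ i j)) i j))))) =
      (∑ i : Fin n, ∑ j : Fin n,
        (x i) (SF.J ((x j) (SF.J ((Matrix.of fun i j => A (ξ i j)) i j))))) +
      (∑ i : Fin n, ∑ j : Fin n,
        (x i) (SF.J ((x j) (SF.J ((Matrix.of fun i j => B (ξ i j)) i j))))) := by
    simp only [Matrix.of_apply, ContinuousLinearMap.add_apply, map_add,
      Finset.sum_add_distrib]
  rw [he]
  exact hsum

lemma isCP_smul_real {A : H →L[ℂ] H} (c : ℝ) (hc : 0 ≤ c)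
    (hA : IsCompletelyPositive SF SF A) :
    IsCompletelyPositive SF SF ((c : ℂ) • A) := by
  intro n ξ hξ x hx
  have hA' := SF.cone_P c hc _ (hA n ξ hξ x hx)
  have he : (∑ i : Fin n, ∑ j : Fin n,
      (x i) (SF.J ((x j) (SF.J ((Matrix.of fun i j => ((c:ℂ) • A) (ξ i j)) i j))))) =
      c • (∑ i : Fin n, ∑ j : Fin n,
        (x i) (SF.J ((x j) (SF.J ((Matrix.of fun i j => A (ξ i j)) i j))))) := by
    simp only [Matrix.of_apply, ContinuousLinearMap.smul_apply, ← Complex.coe_smul,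
      map_smulₛₗ, RingHom.id_apply, Complex.conj_ofReal, map_smul, Finset.smul_sum]
  rw [he]
  exact hA'

lemma mem_P_of_cp {T : H →L[ℂ] H} (hT : IsCompletelyPositive SF SF T) {ζ : H}
    (hζ : ζ ∈ SF.P) : T ζ ∈ SF.P := by
  have hcone : (Matrix.of fun _ _ : Fin 1 => ζ) ∈ SF.matrixCone 1 := by
    intro x hx
    simpa [Fin.sum_univ_one] using SF.xJxJ_P (x 0) (hx 0) ζ hζ
  have h2 := hT 1 _ hcone (fun _ => 1) (fun _ => one_mem _)
  simpa [Fin.sum_univ_one, SF.involutive_J] using h2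

lemma isCP_theta {ξ₀ : H} (hξ₀P : ξ₀ ∈ SF.P) :
    IsCompletelyPositive SF SF ((innerSL ℂ ξ₀).smulRight ξ₀) := by
  classical
  intro n ξ hξ x hx
  set A : Matrix (Fin n) (Fin n) ℂ := Matrix.of fun i j => (inner ℂ ξ₀ (ξ i j) : ℂ) with hA
  have hQ : ∀ v : Fin n → ℂ, dotProduct (star v) (A.mulVec v) =
      (inner ℂ ξ₀ (∑ i : Fin n, ∑ j : Fin n, ((starRingEnd ℂ) (v i) * v j) • ξ i j) : ℂ) := by
    intro v
    simp only [dotProduct, Matrix.mulVec, Pi.star_apply, RCLike.star_def,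
      inner_sum, inner_smul_right, Finset.mul_sum, hA, Matrix.of_apply]
    refine Finset.sum_congr rfl fun i _ => ?_
    refine Finset.sum_congr rfl fun j _ => ?_
    ring
  have hwP : ∀ v : Fin n → ℂ,
      (∑ i : Fin n, ∑ j : Fin n, ((starRingEnd ℂ) (v i) * v j) • ξ i j) ∈ SF.P := by
    intro v
    have h1 := hξ (fun i => (starRingEnd ℂ) (v i) • 1)
      (fun i => SF.M.toStarSubalgebra.smul_mem (one_mem _) _)
    have he : (∑ i : Fin n, ∑ j : Fin n,
        ((starRingEnd ℂ) (v i) • (1 : H →L[ℂ] H))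
          (SF.J (((starRingEnd ℂ) (v j) • (1 : H →L[ℂ] H)) (SF.J (ξ i j))))) =
        ∑ i : Fin n, ∑ j : Fin n, ((starRingEnd ℂ) (v i) * v j) • ξ i j := by
      refine Finset.sum_congr rfl fun i _ => Finset.sum_congr rfl fun j _ => ?_
      simp only [ContinuousLinearMap.smul_apply, ContinuousLinearMap.one_apply,
        map_smulₛₗ, Complex.conj_conj, SF.involutive_J, smul_smul, RingHom.id_apply]
      rw [mul_comm]
    rw [he] at h1
    exact h1
  have hpos : ∀ v : Fin n → ℂ, 0 ≤ dotProduct (star v) (A.mulVec v) := by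
    intro v
    rw [hQ v]
    exact SF.P_inner_nonneg hξ₀P (hwP v)
  have hherm : A.IsHermitian := by
    rw [Matrix.isHermitian_iff_isSymmetric]
    rw [LinearMap.isSymmetric_iff_inner_map_self_real]
    intro v
    set w : Fin n → ℂ := (WithLp.equiv 2 (Fin n → ℂ)) v with hw
    have he : (inner ℂ (Matrix.toEuclideanLin A v) v : ℂ) =
        (starRingEnd ℂ) (dotProduct (star w) (A.mulVec w)) := by
      simp only [PiLp.inner_apply, RCLike.inner_apply, Matrix.toEuclideanLin_apply,
        dotProduct, map_sum, map_mul, Complex.conj_conj, Pi.star_apply,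
        RCLike.star_def]
      refine Finset.sum_congr rfl fun i _ => ?_
      rw [mul_comm]
      exact mul_comm _ _
    have hreal : (starRingEnd ℂ) (dotProduct (star w) (A.mulVec w)) =
        dotProduct (star w) (A.mulVec w) := by
      rw [Complex.conj_eq_iff_im]
      exact ((Complex.le_def.mp (hpos w)).2).symm
    rw [he, Complex.conj_conj]
    exact hreal.symm
  obtain ⟨B, hB⟩ : ∃ B : Matrix (Fin n) (Fin n) ℂ, A = B.conjTranspose * B := by
    open scoped MatrixOrder in
    exact ⟨CFC.sqrt A, by
      have h0 : 0 ≤ A := (Matrix.PosSemidef.of_dotProduct_mulVec_nonneg hherm hpos).nonneg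
      rw [← Matrix.star_eq_conjTranspose, (CFC.sqrt_nonneg A).isSelfAdjoint.star_eq,
        CFC.sqrt_mul_sqrt_self A h0]⟩
  have hABk : ∀ i j, A i j = ∑ k : Fin n, (starRingEnd ℂ) (B k i) * B k j := by
    intro i j
    rw [hB]
    simp [Matrix.mul_apply, Matrix.conjTranspose_apply, RCLike.star_def]
  -- y k := ∑ i, conj (B k i) • x i
  set y : Fin n → (H →L[ℂ] H) := fun k => ∑ i : Fin n, (starRingEnd ℂ) (B k i) • x i
    with hy
  have hyM : ∀ k, y k ∈ SF.M := fun k =>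
    sum_mem (fun i _ => SF.M.toStarSubalgebra.smul_mem (hx i) _)
  set c : Fin n → Fin n → H := fun i j => x i (SF.J (x j (SF.J ξ₀))) with hc
  have hyk : ∀ k, y k (SF.J (y k (SF.J ξ₀))) =
      ∑ i : Fin n, ∑ j : Fin n, ((starRingEnd ℂ) (B k i) * B k j) • c i j := by
    intro k
    rw [hy]
    simp only [ContinuousLinearMap.sum_apply, ContinuousLinearMap.smul_apply, map_sum,
      map_smulₛₗ, Complex.conj_conj, map_smul, Finset.smul_sum, smul_smul, hc]
    rw [Finset.sum_comm]
    refine Finset.sum_congr rfl fun i _ => Finset.sum_congr rfl fun j _ => ?_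
    simp only [RingHom.id_apply]
    rw [mul_comm]
  have hentry : ∀ i j, (x i) (SF.J ((x j) (SF.J
      ((Matrix.of fun i j => ((innerSL ℂ ξ₀).smulRight ξ₀) (ξ i j)) i j)))) =
      A i j • c i j := by
    intro i j
    simp only [Matrix.of_apply, ContinuousLinearMap.smulRight_apply, innerSL_apply_apply,
      map_smulₛₗ, RingHom.id_apply, Complex.conj_conj, map_smul, hA, hc]
  have hgoal : (∑ i : Fin n, ∑ j : Fin n, (x i) (SF.J ((x j) (SF.J
      ((Matrix.of fun i j => ((innerSL ℂ ξ₀).smulRight ξ₀) (ξ i j)) i j))))) =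
      ∑ k : Fin n, y k (SF.J (y k (SF.J ξ₀))) := by
    calc (∑ i : Fin n, ∑ j : Fin n, (x i) (SF.J ((x j) (SF.J
          ((Matrix.of fun i j => ((innerSL ℂ ξ₀).smulRight ξ₀) (ξ i j)) i j))))) =
        ∑ i : Fin n, ∑ j : Fin n, ∑ k : Fin n,
          ((starRingEnd ℂ) (B k i) * B k j) • c i j := by
          refine Finset.sum_congr rfl fun i _ => Finset.sum_congr rfl fun j _ => ?_
          rw [hentry i j, hABk i j, Finset.sum_smul]
      _ = ∑ i : Fin n, ∑ k : Fin n, ∑ j : Fin n,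
          ((starRingEnd ℂ) (B k i) * B k j) • c i j :=
          Finset.sum_congr rfl fun i _ => Finset.sum_comm
      _ = ∑ k : Fin n, ∑ i : Fin n, ∑ j : Fin n,
          ((starRingEnd ℂ) (B k i) * B k j) • c i j := Finset.sum_comm
      _ = ∑ k : Fin n, y k (SF.J (y k (SF.J ξ₀))) :=
          Finset.sum_congr rfl fun k _ => (hyk k).symm
  rw [hgoal]
  exact SF.P_sum _ _ (SF.P_zero hξ₀P) (fun k _ => SF.xJxJ_P (y k) (hyM k) ξ₀ hξ₀P)

end CP

end StandardForm

section Theta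

variable (SF : StandardForm H)

lemma theta_compact (ξ₀ : H) : IsCompactOperator ⇑((innerSL ℂ ξ₀).smulRight ξ₀) := by
  refine ⟨(fun z : ℂ => z • ξ₀) '' Metric.closedBall 0 ‖ξ₀‖, ?_, ?_⟩
  · exact (isCompact_closedBall 0 ‖ξ₀‖).image (continuous_id.smul continuous_const)
  · refine Filter.mem_of_superset (Metric.closedBall_mem_nhds (0:H) one_pos) ?_
    intro ξ hξ
    refine ⟨(inner ℂ ξ₀ ξ : ℂ), ?_, by simp⟩
    rw [Metric.mem_closedBall, dist_zero_right]
    calc ‖(inner ℂ ξ₀ ξ : ℂ)‖ ≤ ‖ξ₀‖ * ‖ξ‖ := norm_inner_le_norm ξ₀ ξ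
      _ ≤ ‖ξ₀‖ * 1 := by
          have h1 : ‖ξ‖ ≤ 1 := by simpa [dist_zero_right] using hξ
          exact mul_le_mul_of_nonneg_left h1 (norm_nonneg _)
      _ = ‖ξ₀‖ := mul_one _

lemma theta_norm (ξ₀ : H) : ‖(innerSL ℂ ξ₀).smulRight ξ₀‖ ≤ ‖ξ₀‖^2 := by
  apply ContinuousLinearMap.opNorm_le_bound _ (by positivity)
  intro z
  simp only [ContinuousLinearMap.smulRight_apply, innerSL_apply_apply, norm_smul]
  calc ‖(inner ℂ ξ₀ z : ℂ)‖ * ‖ξ₀‖ ≤ (‖ξ₀‖ * ‖z‖) * ‖ξ₀‖ := by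
        have := norm_inner_le_norm (𝕜 := ℂ) ξ₀ z
        exact mul_le_mul_of_nonneg_right this (norm_nonneg _)
    _ = ‖ξ₀‖^2 * ‖z‖ := by ring

end Theta

/-- Let `(M, H, J, P)` be a standard form of a σ-finite von Neumann
algebra with a cyclic and separating vector `ξ₀ ∈ P`.  Given a net `(Sₙ)` of completely
positive operators on `H` with `Sₙ → 1` strongly, there is a net `(S′ₙ)` of completely
positive operators such that `S′ₙ → 1` strongly, `S′ₙ − Sₙ` is a rank one operator,
`‖S′ₙ − Sₙ‖ → 0` and each `S′ₙ ξ₀` is cyclic and separating.  In particular, if each `Sₙ`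
is moreover a compact contraction, there is a net `(Tₙ)` of compact completely positive
contractions with `Tₙ → 1` strongly such that each `Tₙ ξ₀` is cyclic and separating. -/
theorem perturb_net_cyclicSeparating
    (SF : StandardForm H) (ξ₀ : H) (hξ₀P : ξ₀ ∈ SF.P)
    (hcyc : Dense {η : H | ∃ x ∈ SF.M, η = x ξ₀})
    (hsep : ∀ x : H →L[ℂ] H, x ∈ SF.M → x ξ₀ = 0 → x = 0)
    (S : Net.{u} (H →L[ℂ] H))
    (hScp : ∀ n, IsCompletelyPositive SF SF (S.f n))
    (hSlim : ∀ ξ : H, Tendsto (fun n => S.f n ξ) atTop (𝓝 ξ)) :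
    (∃ S' : S.ι → (H →L[ℂ] H),
      (∀ n, IsCompletelyPositive SF SF (S' n)) ∧
      (∀ ξ : H, Tendsto (fun n => S' n ξ) atTop (𝓝 ξ)) ∧
      (∀ n, ∃ a b : H, ∀ ξ : H, (S' n - S.f n) ξ = (inner ℂ a ξ : ℂ) • b) ∧
      Tendsto (fun n => ‖S' n - S.f n‖) atTop (𝓝 (0 : ℝ)) ∧
      (∀ n, Dense {η : H | ∃ x ∈ SF.M, η = x (S' n ξ₀)} ∧
        ∀ x : H →L[ℂ] H, x ∈ SF.M → x (S' n ξ₀) = 0 → x = 0)) ∧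
    ((∀ n, IsCompactOperator ⇑(S.f n) ∧ ‖S.f n‖ ≤ 1) →
      ∃ T : Net.{u} (H →L[ℂ] H),
        (∀ n, IsCompactOperator ⇑(T.f n) ∧ ‖T.f n‖ ≤ 1 ∧
          IsCompletelyPositive SF SF (T.f n)) ∧
        (∀ ξ : H, Tendsto (fun n => T.f n ξ) atTop (𝓝 ξ)) ∧
        (∀ n, Dense {η : H | ∃ x ∈ SF.M, η = x (T.f n ξ₀)} ∧
          ∀ x : H →L[ℂ] H, x ∈ SF.M → x (T.f n ξ₀) = 0 → x = 0)) := by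
  classical
  set Θ : H →L[ℂ] H := (innerSL ℂ ξ₀).smulRight ξ₀ with hΘ
  set δ : S.ι → ℝ := fun n => ‖S.f n ξ₀ - ξ₀‖ with hδ
  have hδ0 : ∀ n, 0 ≤ δ n := fun n => norm_nonneg _
  set c : S.ι → ℝ := fun n => δ n / ‖ξ₀‖^2 with hc
  have hc0 : ∀ n, 0 ≤ c n := fun n => div_nonneg (hδ0 n) (sq_nonneg _)
  set S' : S.ι → (H →L[ℂ] H) := fun n => S.f n + (c n : ℂ) • Θ with hS'
  have hδlim : Tendsto δ atTop (𝓝 0) := by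
    have h1 := (hSlim ξ₀).sub (tendsto_const_nhds (x := ξ₀))
    rw [sub_self] at h1
    simpa [hδ] using h1.norm
  have hΘnorm : ‖Θ‖ ≤ ‖ξ₀‖^2 := theta_norm ξ₀
  have hrnorm : ∀ n, ‖((c n : ℝ) : ℂ)‖ = c n := by
    intro n
    rw [Complex.norm_real]
    exact abs_of_nonneg (hc0 n)
  have hdiffnorm : ∀ n, ‖(c n : ℂ) • Θ‖ ≤ δ n := by
    intro n
    rw [norm_smul, hrnorm n]
    by_cases hξ : ‖ξ₀‖ = 0
    · have hΘ0 : ‖Θ‖ = 0 := le_antisymm (by simpa [hξ] using hΘnorm) (norm_nonneg _)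
      rw [hΘ0, mul_zero]
      exact hδ0 n
    · calc c n * ‖Θ‖ ≤ c n * ‖ξ₀‖^2 := mul_le_mul_of_nonneg_left hΘnorm (hc0 n)
        _ = δ n := by
            rw [hc]
            exact div_mul_cancel₀ _ (pow_ne_zero 2 hξ)
  have hdiff : ∀ n, S' n - S.f n = (c n : ℂ) • Θ := fun n => by
    rw [hS']; exact add_sub_cancel_left _ _
  have happly : ∀ n (ξ : H), S' n ξ = S.f n ξ + (c n : ℂ) • ((inner ℂ ξ₀ ξ : ℂ) • ξ₀) := by
    intro n ξ
    simp [hS', hΘ]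
  have hcp' : ∀ n, IsCompletelyPositive SF SF (S' n) := fun n =>
    SF.isCP_add (hScp n) (SF.isCP_smul_real (c n) (hc0 n) (SF.isCP_theta hξ₀P))
  have hclim : Tendsto (fun n => ((c n : ℝ) : ℂ)) atTop (𝓝 0) := by
    have h0 := hδlim.div_const (‖ξ₀‖^2)
    rw [zero_div] at h0
    have h1 := (Complex.continuous_ofReal.tendsto 0).comp h0
    simpa [hc, Function.comp_def, Complex.ofReal_div] using h1
  have hstrong : ∀ ξ : H, Tendsto (fun n => S' n ξ) atTop (𝓝 ξ) := by
    intro ξ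
    have h2 : Tendsto (fun n => ((c n : ℝ) : ℂ) • ((inner ℂ ξ₀ ξ : ℂ) • ξ₀)) atTop (𝓝 0) := by
      simpa using hclim.smul_const ((inner ℂ ξ₀ ξ : ℂ) • ξ₀)
    have h3 := (hSlim ξ).add h2
    rw [add_zero] at h3
    exact Tendsto.congr (fun n => (happly n ξ).symm) h3
  have hcs : ∀ n, Dense {η : H | ∃ x ∈ SF.M, η = x (S' n ξ₀)} ∧
      ∀ x : H →L[ℂ] H, x ∈ SF.M → x (S' n ξ₀) = 0 → x = 0 := by
    intro n
    by_cases h0 : δ n = 0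
    · have hfix : S.f n ξ₀ = ξ₀ := by
        have h1 : ‖S.f n ξ₀ - ξ₀‖ = 0 := h0
        rwa [norm_eq_zero, sub_eq_zero] at h1
      have hc0' : c n = 0 := by rw [hc]; simp only [h0, zero_div]
      have hval : S' n ξ₀ = ξ₀ := by
        rw [happly, hc0', hfix]
        simp
      rw [hval]
      exact ⟨hcyc, hsep⟩
    · have hδpos : 0 < δ n := lt_of_le_of_ne (hδ0 n) (Ne.symm h0)
      have hξ0ne : ξ₀ ≠ 0 := by
        intro h
        apply h0
        rw [hδ, h]
        simp
      have hval : S' n ξ₀ = S.f n ξ₀ + δ n • ξ₀ := by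
        rw [happly]
        congr 1
        have hinn : (inner ℂ ξ₀ ξ₀ : ℂ) = ((‖ξ₀‖^2 : ℝ) : ℂ) := by
          rw [inner_self_eq_norm_sq_to_K]
          norm_cast
        rw [hinn, smul_smul, ← Complex.ofReal_mul, hc,
          div_mul_cancel₀ _ (pow_ne_zero 2 (norm_ne_zero_iff.mpr hξ0ne)),
          Complex.coe_smul]
      have hmemP : S.f n ξ₀ ∈ SF.P := SF.mem_P_of_cp (hScp n) hξ₀P
      rw [hval]
      exact ⟨StandardForm.cyclic_shift hξ₀P hsep hmemP hδpos,
        fun x hx hxz => StandardForm.sep_shift hξ₀P hsep hmemP hδpos hx hxz⟩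
  refine ⟨⟨S', hcp', hstrong, ?_, ?_, hcs⟩, ?_⟩
  · intro n
    refine ⟨c n • ξ₀, ξ₀, fun ξ => ?_⟩
    rw [hdiff n]
    simp only [ContinuousLinearMap.coe_smul', Pi.smul_apply, hΘ,
      ContinuousLinearMap.smulRight_apply, innerSL_apply_apply, ← Complex.coe_smul,
      inner_smul_left, Complex.conj_ofReal, smul_smul]
  · refine squeeze_zero (fun n => norm_nonneg _) (fun n => ?_) hδlim
    rw [hdiff n]
    exact hdiffnorm n
  · intro hcompact
    set r : S.ι → ℝ := fun n => (1 + δ n)⁻¹ with hr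
    have h1δ : ∀ n, (0:ℝ) < 1 + δ n := fun n => by linarith [hδ0 n]
    have hrpos : ∀ n, 0 < r n := fun n => inv_pos.mpr (h1δ n)
    refine ⟨@Net.mk _ S.ι S.pre S.ne S.directed (fun n => ((r n : ℝ) : ℂ) • S' n),
      ?_, ?_, ?_⟩
    · intro n
      refine ⟨?_, ?_, SF.isCP_smul_real (r n) (hrpos n).le (hcp' n)⟩
      · have h1 : IsCompactOperator ⇑(S' n) := by
          rw [hS']
          have h2 := ((hcompact n).1.add (((theta_compact ξ₀)).smul ((c n : ℂ))))
          simpa [ContinuousLinearMap.coe_add', ContinuousLinearMap.coe_smul'] using h2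
        have h3 := h1.smul ((r n : ℂ))
        simpa [ContinuousLinearMap.coe_smul'] using h3
      · rw [norm_smul, Complex.norm_real, Real.norm_of_nonneg (hrpos n).le]
        calc r n * ‖S' n‖ ≤ r n * (1 + δ n) := by
              apply mul_le_mul_of_nonneg_left _ (hrpos n).le
              calc ‖S' n‖ ≤ ‖S.f n‖ + ‖(c n : ℂ) • Θ‖ := by
                    rw [hS']; exact norm_add_le _ _
                _ ≤ 1 + δ n := add_le_add (hcompact n).2 (hdiffnorm n)
          _ = 1 := inv_mul_cancel₀ (h1δ n).ne'
    · intro ξ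
      have h1 : Tendsto (fun n => 1 + δ n) atTop (𝓝 (1:ℝ)) := by
        simpa using tendsto_const_nhds.add hδlim
      have h2 : Tendsto r atTop (𝓝 1) := by
        have := h1.inv₀ one_ne_zero
        simpa [hr] using this
      have h3 : Tendsto (fun n => ((r n : ℝ) : ℂ)) atTop (𝓝 1) := by
        have := (Complex.continuous_ofReal.tendsto 1).comp h2
        exact this
      have h4 := h3.smul (hstrong ξ)
      rw [one_smul] at h4
      exact h4
    · intro n
      have h := hcs n
      have h5 := StandardForm.scale_cs (SF := SF) ((r n : ℝ) : ℂ)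
        (Complex.ofReal_ne_zero.mpr (hrpos n).ne') (S' n ξ₀) h.1 h.2
      simpa only [ContinuousLinearMap.coe_smul', Pi.smul_apply] using h5
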